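/- Example 3 (sharpness of Theorems 1–3 for α ≤ 0): Let n ≥ 1, α ≤ 0, q > 1 and q > 1 + α/n, and let α̂ be any positive number with q > 1 + α̂/n. Let β = 1/(q−1), 1/(α̂n(q−1)) < γ ≤ 1/α̂², and 0 < κ ≤ (α̂n(γ − 1/(α̂n(q−1))))^{1/(q−1)}. Define u(t,x) = κ t^{−β} exp(−γ(1+|x|²)^{α̂/2}/t) for t > 0 and u(t,x) = 0 for t ≤ 0, and let a_{ij}(t,x) = (1+|x|²)^{(2−α̂)/2} δ_{ij}. Then the coefficients a_{ij} satisfy condition (8) with exponent α and some c > 0, and u is a C^∞, nonnegative, not identically zero function satisfying u_t(t,x) ≥ Σ_{i=1}^n ∂_{x_i}(a_{ii} ∂_{x_i}u)(t,x) + |u(t,x)|^{q−1}u(t,x) for every (t,x) ∈ ℝ × ℝⁿ. -/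

import Mathlib

open MeasureTheory

noncomputable section

/-- The whole space `ℝ × ℝⁿ` (time × space). -/
abbrev Sp (n : ℕ) : Type := ℝ × EuclideanSpace ℝ (Fin n)

/-- Classical partial derivative in the time direction. -/
def pdt {n : ℕ} (f : Sp n → ℝ) (p : Sp n) : ℝ :=
  fderiv ℝ f p (1, 0)

/-- Classical partial derivative in the `i`-th space direction. -/
def pdx {n : ℕ} (i : Fin n) (f : Sp n → ℝ) (p : Sp n) : ℝ :=
  fderiv ℝ f p (0, EuclideanSpace.single i 1)

/-- The odd nonlinearity `s ↦ |s|^(q-1) s` (with the convention `|0|^(q-1)·0 = 0`). -/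
def nl (q s : ℝ) : ℝ := |s| ^ (q - 1) * s

/-- A test function: infinitely differentiable with compact support. -/
def IsTest {n : ℕ} (φ : Sp n → ℝ) : Prop :=
  ContDiff ℝ (⊤ : ℕ∞) φ ∧ HasCompactSupport φ

/-- `g` is the weak time-derivative of `u` on `ℝ × ℝⁿ`: `g` is locally integrable and
integration by parts against every test function holds. -/
def IsWeakDerivT {n : ℕ} (u g : Sp n → ℝ) : Prop :=
  LocallyIntegrable g volume ∧
  ∀ φ : Sp n → ℝ, IsTest φ → ∫ p, u p * pdt φ p = -∫ p, g p * φ p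

/-- `g` is the weak `x_i`-derivative of `u` on `ℝ × ℝⁿ`. -/
def IsWeakDerivX {n : ℕ} (i : Fin n) (u g : Sp n → ℝ) : Prop :=
  LocallyIntegrable g volume ∧
  ∀ φ : Sp n → ℝ, IsTest φ → ∫ p, u p * pdx i φ p = -∫ p, g p * φ p

/-- Standing assumptions on the coefficients `a_{ij}` and the dominating function `A`:
measurability, local boundedness, symmetry, and `0 ≤ Σ a_{ij} ξ_i ξ_j ≤ A |ξ|²` a.e. -/
structure Coeffs (n : ℕ) (a : Fin n → Fin n → Sp n → ℝ) (A : Sp n → ℝ) : Prop where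
  meas : ∀ i j, Measurable (a i j)
  locBdd : ∀ i j, ∀ K : Set (Sp n), IsCompact K → ∃ C : ℝ, ∀ p ∈ K, |a i j p| ≤ C
  symm : ∀ᵐ p : Sp n, ∀ i j, a i j p = a j i p
  measA : Measurable A
  nonnegA : ∀ p, 0 ≤ A p
  locBddA : ∀ K : Set (Sp n), IsCompact K → ∃ C : ℝ, ∀ p ∈ K, A p ≤ C
  quad : ∀ᵐ p : Sp n, ∀ ξ : Fin n → ℝ,
    0 ≤ ∑ i : Fin n, ∑ j : Fin n, a i j p * ξ i * ξ j ∧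
    ∑ i : Fin n, ∑ j : Fin n, a i j p * ξ i * ξ j ≤ A p * ∑ i : Fin n, ξ i ^ 2

/-- Condition (8): the essential supremum of `A` over the slab `{R/2 < |x| < R}`
is at most `c·R^(2-α)`, for every `R > 1`. -/
def Cond8 {n : ℕ} (A : Sp n → ℝ) (α c : ℝ) : Prop :=
  ∀ R : ℝ, 1 < R →
    ∀ᵐ p : Sp n, (R / 2 < ‖p.2‖ ∧ ‖p.2‖ < R) → A p ≤ c * R ^ (2 - α)

/-- `(u, v)` is a weak solution of
`u_t − Σ ∂_{x_i}(a_{ij} ∂_{x_j}u) − |u|^{q−1}u ≥ v_t − Σ ∂_{x_i}(a_{ij} ∂_{x_j}v) − |v|^{q−1}v`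
in the whole space `ℝ × ℝⁿ`. -/
def WeakSolPair {n : ℕ} (q : ℝ) (a : Fin n → Fin n → Sp n → ℝ) (u v : Sp n → ℝ) : Prop :=
  Measurable u ∧ Measurable v ∧
  LocallyIntegrable u volume ∧ LocallyIntegrable v volume ∧
  LocallyIntegrable (fun p => |u p| ^ q) volume ∧
  LocallyIntegrable (fun p => |v p| ^ q) volume ∧
  ∃ ut vt : Sp n → ℝ, ∃ ux vx : Fin n → Sp n → ℝ,
    IsWeakDerivT u ut ∧ IsWeakDerivT v vt ∧
    (∀ j, IsWeakDerivX j u (ux j)) ∧ (∀ j, IsWeakDerivX j v (vx j)) ∧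
    ∀ φ : Sp n → ℝ, IsTest φ → (∀ p, 0 ≤ φ p) →
      ∫ p, (vt p * φ p + ∑ i : Fin n, ∑ j : Fin n, a i j p * pdx i φ p * vx j p
              - nl q (v p) * φ p) ≤
      ∫ p, (ut p * φ p + ∑ i : Fin n, ∑ j : Fin n, a i j p * pdx i φ p * ux j p
              - nl q (u p) * φ p)

/-- The Example 3 profile (built from the positive parameter `α̂`). -/
def profileU (n : ℕ) (αh β γ κ : ℝ) (p : Sp n) : ℝ :=
  if 0 < p.1 then κ * p.1 ^ (-β) * Real.exp (-γ * (1 + ‖p.2‖ ^ 2) ^ (αh / 2) / p.1) else 0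

/-- The diagonal coefficient `a_{ii}(t,x) = (1+|x|²)^{(2−α̂)/2}`. -/
def coefDiag (n : ℕ) (αh : ℝ) (p : Sp n) : ℝ :=
  (1 + ‖p.2‖ ^ 2) ^ ((2 - αh) / 2)

open Real Filter Topology

noncomputable def gg (c : ℝ) (x : ℝ) : ℝ := if 0 < x then x ^ (-c) * Real.exp (-1/x) else 0

lemma gg_of_nonpos {c x : ℝ} (hx : x ≤ 0) : gg c x = 0 := if_neg (not_lt.2 hx)

lemma gg_of_pos {c x : ℝ} (hx : 0 < x) : gg c x = x ^ (-c) * Real.exp (-1/x) := if_pos hx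

lemma gg_nonneg (c x : ℝ) : 0 ≤ gg c x := by
  unfold gg; split
  · positivity
  · exact le_refl 0

lemma gg_succ (c x : ℝ) : gg c x = x * gg (c+1) x := by
  rcases le_or_gt x 0 with hx | hx
  · rw [gg_of_nonpos hx, gg_of_nonpos hx, mul_zero]
  · rw [gg_of_pos hx, gg_of_pos hx]
    rw [show -c = -(c+1) + 1 by ring, Real.rpow_add hx, Real.rpow_one]
    ring

lemma gg_tendsto_zero (c : ℝ) : Tendsto (gg c) (nhds 0) (nhds 0) := by
  have hle : Tendsto (gg c) (nhdsWithin 0 (Set.Iic 0)) (nhds 0) := by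
    apply Tendsto.congr' (f₁ := fun _ => (0:ℝ))
    · filter_upwards [self_mem_nhdsWithin] with x hx
      exact (gg_of_nonpos hx).symm
    · exact tendsto_const_nhds
  have hgt : Tendsto (gg c) (nhdsWithin 0 (Set.Ioi 0)) (nhds 0) := by
    have h1 : Tendsto (fun y : ℝ => y ^ c * Real.exp (-1 * y)) atTop (nhds 0) :=
      tendsto_rpow_mul_exp_neg_mul_atTop_nhds_zero c 1 one_pos
    have h2 := h1.comp tendsto_inv_nhdsGT_zero
    apply h2.congr'
    filter_upwards [self_mem_nhdsWithin] with x hx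
    have hx' : (0:ℝ) < x := hx
    simp only [Function.comp_apply]
    rw [gg_of_pos hx']
    have e1 : x⁻¹ ^ c = x ^ (-c) := by
      rw [← Real.rpow_neg_one x, ← Real.rpow_mul hx'.le]; norm_num
    have e2 : -1 * x⁻¹ = -1/x := by ring
    rw [e1, e2]
  have h := tendsto_sup.2 ⟨hle, hgt⟩
  rw [← nhdsWithin_union, Set.Iic_union_Ioi, nhdsWithin_univ] at h
  exact h

lemma gg_hasDerivAt (c x : ℝ) :
    HasDerivAt (gg c) (-c * gg (c+1) x + gg (c+2) x) x := by
  rcases lt_trichotomy x 0 with hx | rfl | hx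
  · have hz : gg (c+1) x = 0 := gg_of_nonpos hx.le
    have hz2 : gg (c+2) x = 0 := gg_of_nonpos hx.le
    rw [hz, hz2, mul_zero, add_zero]
    have : (fun y => gg c y) =ᶠ[nhds x] fun _ => (0:ℝ) := by
      filter_upwards [Iio_mem_nhds hx] with y hy
      exact gg_of_nonpos (le_of_lt hy)
    exact (hasDerivAt_const x (0:ℝ)).congr_of_eventuallyEq this
  · rw [gg_of_nonpos le_rfl, gg_of_nonpos le_rfl, mul_zero, add_zero]
    rw [hasDerivAt_iff_tendsto_slope]
    have hs : slope (gg c) 0 =ᶠ[nhdsWithin 0 {(0:ℝ)}ᶜ] gg (c+1) := by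
      filter_upwards [self_mem_nhdsWithin] with y hy
      have hy' : y ≠ 0 := hy
      rw [slope_def_field, gg_of_nonpos le_rfl, sub_zero, sub_zero, gg_succ c y,
        mul_comm, mul_div_assoc, div_self hy', mul_one]
    exact (Tendsto.congr' hs.symm ((gg_tendsto_zero (c+1)).mono_left nhdsWithin_le_nhds))
  · have hformula : ∀ y, 0 < y → gg c y = y ^ (-c) * Real.exp (-1/y) := fun y hy => gg_of_pos hy
    have hev : (fun y => y ^ (-c) * Real.exp (-1/y)) =ᶠ[nhds x] gg c := by
      filter_upwards [Ioi_mem_nhds hx] with y hy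
      exact (gg_of_pos hy).symm
    have h1 : HasDerivAt (fun y : ℝ => y ^ (-c)) (-c * x ^ (-c-1)) x :=
      Real.hasDerivAt_rpow_const (Or.inl hx.ne')
    have h2 : HasDerivAt (fun y : ℝ => -1/y) ((x^2)⁻¹) x := by
      have := (hasDerivAt_inv hx.ne').neg
      simpa [neg_div, one_div, Pi.neg_def] using this.congr_deriv (by ring)
    have h3 : HasDerivAt (fun y : ℝ => Real.exp (-1/y)) (Real.exp (-1/x) * (x^2)⁻¹) x := h2.exp
    have h4 := h1.mul h3
    refine (h4.congr_of_eventuallyEq hev.symm).congr_deriv ?_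
    rw [gg_of_pos hx, gg_of_pos hx]
    have e1 : x ^ (-(c+1)) = x ^ (-c-1) := by ring_nf
    have e2 : x ^ (-(c+2)) = x ^ (-c) * (x^2)⁻¹ := by
      rw [show -(c+2) = -c + (-1) + (-1) by ring, Real.rpow_add hx, Real.rpow_add hx,
        Real.rpow_neg_one, pow_two, mul_inv]
      ring
    rw [e1, e2]
    ring

lemma gg_differentiable (c : ℝ) : Differentiable ℝ (gg c) :=
  fun x => (gg_hasDerivAt c x).differentiableAt

lemma gg_deriv (c : ℝ) : deriv (gg c) = fun x => -c * gg (c+1) x + gg (c+2) x :=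
  funext fun x => (gg_hasDerivAt c x).deriv

lemma gg_contDiff_nat : ∀ (m : ℕ) (c : ℝ), ContDiff ℝ (m : ℕ) (gg c) := by
  intro m
  induction m with
  | zero => exact fun c => contDiff_zero.2 (gg_differentiable c).continuous
  | succ m ih =>
    intro c
    rw [show ((m+1 : ℕ) : WithTop ℕ∞) = (m : ℕ) + 1 by norm_cast, contDiff_succ_iff_deriv]
    refine ⟨gg_differentiable c, by simp, ?_⟩
    rw [gg_deriv]
    exact (contDiff_const.mul (ih (c+1))).add (ih (c+2))

lemma gg_smooth (c : ℝ) : ContDiff ℝ (⊤ : ℕ∞) (gg c) :=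
  contDiff_infty.2 fun m => gg_contDiff_nat m c

namespace Ex3

open Real Filter

variable {n : ℕ}

lemma pdt_eq {f : Sp n → ℝ} {p : Sp n} (hf : DifferentiableAt ℝ f p) {D : ℝ}
    (h : HasDerivAt (fun s : ℝ => f (p.1 + s, p.2)) D 0) : pdt f p = D := by
  have hc : HasDerivAt (fun s : ℝ => ((p.1 + s, p.2) : Sp n))
      ((1 : ℝ), (0 : EuclideanSpace ℝ (Fin n))) 0 :=
    ((hasDerivAt_id 0).const_add p.1).prodMk (hasDerivAt_const 0 p.2)
  have hf' : HasFDerivAt f (fderiv ℝ f p) ((fun s : ℝ => ((p.1 + s, p.2) : Sp n)) 0) := by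
    simpa using hf.hasFDerivAt
  have h2 : HasDerivAt (fun s : ℝ => f (p.1 + s, p.2)) (fderiv ℝ f p (1, 0)) 0 := by
    exact hf'.comp_hasDerivAt 0 hc
  exact h2.unique h

lemma pdx_eq {f : Sp n → ℝ} {p : Sp n} (i : Fin n) (hf : DifferentiableAt ℝ f p) {D : ℝ}
    (h : HasDerivAt (fun s : ℝ => f (p.1, p.2 + s • EuclideanSpace.single i (1:ℝ))) D 0) :
    pdx i f p = D := by
  have hc : HasDerivAt (fun s : ℝ =>
      ((p.1, p.2 + s • EuclideanSpace.single i (1:ℝ)) : Sp n))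
      ((0 : ℝ), EuclideanSpace.single i (1:ℝ)) 0 := by
    have h2 : HasDerivAt (fun s : ℝ => p.2 + s • EuclideanSpace.single i (1:ℝ))
        ((1:ℝ) • EuclideanSpace.single i (1:ℝ)) 0 :=
      ((hasDerivAt_id 0).smul_const (EuclideanSpace.single i (1:ℝ))).const_add p.2
    simpa using (hasDerivAt_const 0 p.1).prodMk h2
  have hf' : HasFDerivAt f (fderiv ℝ f p)
      ((fun s : ℝ => ((p.1, p.2 + s • EuclideanSpace.single i (1:ℝ)) : Sp n)) 0) := by
    simpa using hf.hasFDerivAt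
  have h2 : HasDerivAt (fun s : ℝ => f (p.1, p.2 + s • EuclideanSpace.single i (1:ℝ)))
      (fderiv ℝ f p (0, EuclideanSpace.single i (1:ℝ))) 0 := by
    exact hf'.comp_hasDerivAt 0 hc
  exact h2.unique h

end Ex3

namespace Ex3
open Real Filter
variable {n : ℕ}

/-- The spatial weight `w(x) = (1+|x|²)^(α̂/2)`. -/
def wn (αh : ℝ) (x : EuclideanSpace ℝ (Fin n)) : ℝ := (1 + ‖x‖^2) ^ (αh/2)

lemma one_add_normsq_pos (x : EuclideanSpace ℝ (Fin n)) : 0 < 1 + ‖x‖^2 := by positivity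

lemma wn_pos (αh : ℝ) (x : EuclideanSpace ℝ (Fin n)) : 0 < wn αh x :=
  Real.rpow_pos_of_pos (one_add_normsq_pos x) _

lemma one_le_wn {αh : ℝ} (hαh : 0 ≤ αh) (x : EuclideanSpace ℝ (Fin n)) : 1 ≤ wn αh x :=
  Real.one_le_rpow (by nlinarith [sq_nonneg ‖x‖]) (by positivity)

lemma wn_contDiff (αh : ℝ) : ContDiff ℝ (⊤ : ℕ∞) (wn (n := n) αh) := by
  rw [contDiff_iff_contDiffAt]
  intro x
  exact (contDiffAt_const.add ((contDiff_norm_sq ℝ).contDiffAt)).rpow_const_of_ne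
    (one_add_normsq_pos x).ne'

lemma normsq_line (x : EuclideanSpace ℝ (Fin n)) (i : Fin n) (h : ℝ) :
    ‖x + h • EuclideanSpace.single i (1:ℝ)‖^2 = ‖x‖^2 + 2 * x i * h + h^2 := by
  rw [norm_add_sq_real, real_inner_smul_right, EuclideanSpace.inner_single_right,
    norm_smul, EuclideanSpace.norm_single]
  simp [mul_pow, sq_abs]
  ring

lemma coord_line (x : EuclideanSpace ℝ (Fin n)) (i : Fin n) (h : ℝ) :
    (x + h • EuclideanSpace.single i (1:ℝ)) i = x i + h := by
  simp [EuclideanSpace.single_apply]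

lemma normsq_eq_sum (x : EuclideanSpace ℝ (Fin n)) : ‖x‖^2 = ∑ i : Fin n, (x i)^2 := by
  rw [EuclideanSpace.norm_eq, Real.sq_sqrt (by positivity)]
  simp [sq_abs]

/-- Derivative of `w` along the `i`-th coordinate line. -/
lemma wn_hasDerivAt (αh : ℝ) (x : EuclideanSpace ℝ (Fin n)) (i : Fin n) :
    HasDerivAt (fun h : ℝ => wn αh (x + h • EuclideanSpace.single i (1:ℝ)))
      (αh * x i * (1 + ‖x‖^2) ^ (αh/2 - 1)) 0 := by
  have hq : HasDerivAt (fun h : ℝ => 1 + (‖x‖^2 + 2 * x i * h + h^2)) (2 * x i) 0 := by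
    have h1 : HasDerivAt (fun h : ℝ => ‖x‖^2 + 2 * x i * h + h^2) (0 + 2 * x i * 1 + 2*0) 0 := by
      exact ((hasDerivAt_const 0 (‖x‖^2)).add ((hasDerivAt_id 0).const_mul (2 * x i))).add
        (by simpa using hasDerivAt_pow 2 (0:ℝ))
    simpa using h1.const_add 1
  have hr : HasDerivAt (fun y : ℝ => y ^ (αh/2)) ((αh/2) * (1 + ‖x‖^2) ^ (αh/2 - 1))
      (1 + (‖x‖^2 + 2 * x i * 0 + 0^2)) := by
    have : (1 : ℝ) + (‖x‖^2 + 2 * x i * 0 + 0^2) = 1 + ‖x‖^2 := by ring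
    rw [this]
    exact Real.hasDerivAt_rpow_const (Or.inl (one_add_normsq_pos x).ne')
  have := hr.comp 0 hq
  have heq : (fun h : ℝ => wn αh (x + h • EuclideanSpace.single i (1:ℝ)))
      = ((fun y : ℝ => y ^ (αh/2)) ∘ (fun h : ℝ => 1 + (‖x‖^2 + 2 * x i * h + h^2))) :=
    funext fun y => by simp only [Function.comp, wn, normsq_line]
  rw [heq]
  exact this.congr_deriv (by ring)

end Ex3

namespace Ex3
open Real Filter
variable {n : ℕ}

/-- Smooth global form of the profile. -/
def UU (αh β γ κ : ℝ) (p : Sp n) : ℝ :=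
  κ * ((γ * wn αh p.2) ^ (-β) * gg β (p.1 / (γ * wn αh p.2)))

/-- Smooth global form of `a_{ii} ∂_{x_i} u`. -/
def VV (αh β γ κ : ℝ) (i : Fin n) (p : Sp n) : ℝ :=
  (-(κ * γ * αh)) * (p.2 i * ((γ * wn αh p.2) ^ (-(β+1)) * gg (β+1) (p.1 / (γ * wn αh p.2))))

lemma W_pos {γ αh : ℝ} (hγ : 0 < γ) (x : EuclideanSpace ℝ (Fin n)) : 0 < γ * wn αh x :=
  mul_pos hγ (wn_pos _ _)

lemma profileU_eq {αh β γ κ : ℝ} (hγ : 0 < γ) :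
    profileU n αh β γ κ = UU (n := n) αh β γ κ := by
  funext p
  have hW := W_pos (αh := αh) hγ p.2
  unfold profileU UU
  by_cases ht : 0 < p.1
  · rw [if_pos ht, gg_of_pos (div_pos ht hW)]
    have h1 : (p.1 / (γ * wn αh p.2)) ^ (-β) = p.1 ^ (-β) / (γ * wn αh p.2) ^ (-β) :=
      Real.div_rpow ht.le (le_of_lt hW) _
    have h2 : -1 / (p.1 / (γ * wn αh p.2)) = -(γ * wn αh p.2) / p.1 := by
      field_simp
    rw [h1, h2]
    have h3 : Real.exp (-(γ * wn αh p.2) / p.1)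
        = Real.exp (-γ * (1 + ‖p.2‖ ^ 2) ^ (αh / 2) / p.1) := by
      congr 1; unfold wn; ring
    rw [h3]
    have h4 : (γ * wn αh p.2) ^ (-β) ≠ 0 := (Real.rpow_pos_of_pos hW _).ne'
    field_simp
  · rw [if_neg ht]
    have : p.1 / (γ * wn αh p.2) ≤ 0 :=
      div_nonpos_of_nonpos_of_nonneg (le_of_not_gt ht) hW.le
    rw [gg_of_nonpos this, mul_zero, mul_zero]

lemma W_contDiff {γ αh : ℝ} : ContDiff ℝ (⊤ : ℕ∞) (fun p : Sp n => γ * wn αh p.2) :=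
  contDiff_const.mul ((wn_contDiff αh).comp contDiff_snd)

lemma UU_contDiff {αh β γ κ : ℝ} (hγ : 0 < γ) :
    ContDiff ℝ (⊤ : ℕ∞) (UU (n := n) αh β γ κ) := by
  have hWne : ∀ p : Sp n, γ * wn αh p.2 ≠ 0 := fun p => (W_pos hγ p.2).ne'
  have h1 : ContDiff ℝ (⊤ : ℕ∞) (fun p : Sp n => (γ * wn αh p.2) ^ (-β)) := by
    rw [contDiff_iff_contDiffAt]
    exact fun p => (W_contDiff.contDiffAt).rpow_const_of_ne (hWne p)
  have h2 : ContDiff ℝ (⊤ : ℕ∞) (fun p : Sp n => gg β (p.1 / (γ * wn αh p.2))) :=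
    (gg_smooth β).comp (contDiff_fst.div W_contDiff hWne)
  exact contDiff_const.mul (h1.mul h2)

lemma coord_contDiff (i : Fin n) : ContDiff ℝ (⊤ : ℕ∞) (fun p : Sp n => p.2 i) :=
  (EuclideanSpace.proj (𝕜 := ℝ) i).contDiff.comp contDiff_snd

lemma VV_contDiff {αh β γ κ : ℝ} (hγ : 0 < γ) (i : Fin n) :
    ContDiff ℝ (⊤ : ℕ∞) (VV (n := n) αh β γ κ i) := by
  have hWne : ∀ p : Sp n, γ * wn αh p.2 ≠ 0 := fun p => (W_pos hγ p.2).ne'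
  have h1 : ContDiff ℝ (⊤ : ℕ∞) (fun p : Sp n => (γ * wn αh p.2) ^ (-(β+1))) := by
    rw [contDiff_iff_contDiffAt]
    exact fun p => (W_contDiff.contDiffAt).rpow_const_of_ne (hWne p)
  have h2 : ContDiff ℝ (⊤ : ℕ∞) (fun p : Sp n => gg (β+1) (p.1 / (γ * wn αh p.2))) :=
    (gg_smooth (β+1)).comp (contDiff_fst.div W_contDiff hWne)
  exact contDiff_const.mul ((coord_contDiff i).mul (h1.mul h2))

end Ex3

namespace Ex3
open Real Filter
variable {n : ℕ}

lemma hasDerivAt_time_gen (c e t W : ℝ) (hW : 0 < W) :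
    HasDerivAt (fun s : ℝ => W ^ e * gg c ((t + s) / W))
      (W ^ e * ((-c * gg (c+1) (t/W) + gg (c+2) (t/W)) * (1/W))) 0 := by
  have h1 : HasDerivAt (fun s : ℝ => (t + s) / W) (1/W) 0 := by
    simpa using (((hasDerivAt_id (0:ℝ)).const_add t).div_const W)
  have h2 := (gg_hasDerivAt c ((t + 0)/W)).comp 0 h1
  simp only [add_zero] at h2
  exact h2.const_mul (W ^ e)

lemma hasDerivAt_space_gen {γ : ℝ} (hγ : 0 < γ) (αh c e t : ℝ)
    (x : EuclideanSpace ℝ (Fin n)) (i : Fin n) :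
    HasDerivAt (fun h : ℝ => (γ * wn αh (x + h • EuclideanSpace.single i (1:ℝ))) ^ e *
        gg c (t / (γ * wn αh (x + h • EuclideanSpace.single i (1:ℝ)))))
      (e * (γ * wn αh x) ^ (e-1) * (γ * (αh * x i * (1 + ‖x‖^2) ^ (αh/2 - 1)))
          * gg c (t / (γ * wn αh x))
        + (γ * wn αh x) ^ e *
          ((-c * gg (c+1) (t / (γ * wn αh x)) + gg (c+2) (t / (γ * wn αh x))) *
            ((0 * (γ * wn αh x) - t * (γ * (αh * x i * (1 + ‖x‖^2) ^ (αh/2 - 1))))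
              / (γ * wn αh x) ^ 2))) 0 := by
  set wi := αh * x i * (1 + ‖x‖^2) ^ (αh/2 - 1) with hwi
  have hW0 : 0 < γ * wn αh x := W_pos hγ x
  have hN : HasDerivAt (fun h : ℝ => γ * wn αh (x + h • EuclideanSpace.single i (1:ℝ)))
      (γ * wi) 0 := (wn_hasDerivAt αh x i).const_mul γ
  have h0 : x + (0:ℝ) • EuclideanSpace.single i (1:ℝ) = x := by simp
  -- the rpow factor
  have hrp0 : HasDerivAt (fun y : ℝ => y ^ e) (e * (γ * wn αh x) ^ (e - 1))
      ((fun h : ℝ => γ * wn αh (x + h • EuclideanSpace.single i (1:ℝ))) 0) := by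
    simp only [h0]
    exact Real.hasDerivAt_rpow_const (Or.inl hW0.ne')
  have hrp := hrp0.comp 0 hN
  -- the quotient
  have hq : HasDerivAt (fun h : ℝ =>
      t / (γ * wn αh (x + h • EuclideanSpace.single i (1:ℝ))))
      ((0 * (γ * wn αh x) - t * (γ * wi)) / (γ * wn αh x) ^ 2) 0 := by
    have := (hasDerivAt_const (0:ℝ) t).div hN (by rw [h0]; exact hW0.ne')
    simpa [h0, Pi.div_def] using this
  have hg0 : HasDerivAt (gg c)
      (-c * gg (c+1) (t / (γ * wn αh x)) + gg (c+2) (t / (γ * wn αh x)))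
      ((fun h : ℝ => t / (γ * wn αh (x + h • EuclideanSpace.single i (1:ℝ)))) 0) := by
    simp only [h0]
    exact gg_hasDerivAt c _
  have hg := hg0.comp 0 hq
  have hfin := hrp.mul hg
  simp only [Function.comp_def, h0] at hfin
  exact hfin

end Ex3

namespace Ex3
open Real Filter
variable {n : ℕ} {αh β γ κ : ℝ}

lemma smooth_diff {f : Sp n → ℝ} (h : ContDiff ℝ (⊤ : ℕ∞) f) : Differentiable ℝ f :=
  h.differentiable (by simp)

lemma pdt_UU (hγ : 0 < γ) (p : Sp n) :
    pdt (UU (n := n) αh β γ κ) p =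
      κ * ((γ * wn αh p.2) ^ (-β) *
        ((-β * gg (β+1) (p.1 / (γ * wn αh p.2)) + gg (β+2) (p.1 / (γ * wn αh p.2)))
          * (1 / (γ * wn αh p.2)))) := by
  refine pdt_eq ((smooth_diff (UU_contDiff hγ)).differentiableAt) ?_
  exact (hasDerivAt_time_gen β (-β) p.1 (γ * wn αh p.2) (W_pos hγ p.2)).const_mul κ

lemma pdx_UU (hγ : 0 < γ) (i : Fin n) (p : Sp n) :
    pdx i (UU (n := n) αh β γ κ) p =
      κ * ((-β) * (γ * wn αh p.2) ^ (-β-1)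
            * (γ * (αh * p.2 i * (1 + ‖p.2‖^2) ^ (αh/2 - 1)))
            * gg β (p.1 / (γ * wn αh p.2))
        + (γ * wn αh p.2) ^ (-β) *
          ((-β * gg (β+1) (p.1 / (γ * wn αh p.2)) + gg (β+2) (p.1 / (γ * wn αh p.2))) *
            ((0 * (γ * wn αh p.2) - p.1 * (γ * (αh * p.2 i * (1 + ‖p.2‖^2) ^ (αh/2 - 1))))
              / (γ * wn αh p.2) ^ 2))) := by
  refine pdx_eq i ((smooth_diff (UU_contDiff hγ)).differentiableAt) ?_
  exact (hasDerivAt_space_gen hγ αh β (-β) p.1 p.2 i).const_mul κ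

lemma coef_pdxUU_eq_VV (hγ : 0 < γ) (i : Fin n) (p : Sp n) :
    coefDiag n αh p * pdx i (UU (n := n) αh β γ κ) p = VV αh β γ κ i p := by
  rw [pdx_UU hγ i p]
  unfold VV coefDiag
  have hB : (0:ℝ) < 1 + ‖p.2‖^2 := one_add_normsq_pos p.2
  have hW : 0 < γ * wn αh p.2 := W_pos hγ p.2
  have hP : (0:ℝ) < (1 + ‖p.2‖^2) ^ ((2 - αh)/2) := Real.rpow_pos_of_pos hB _
  have e0 : (1 + ‖p.2‖^2) ^ ((2 - αh)/2) * (1 + ‖p.2‖^2) ^ (αh/2 - 1) = 1 := by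
    rw [← Real.rpow_add hB, show (2 - αh)/2 + (αh/2 - 1) = 0 by ring, Real.rpow_zero]
  have e0' : (1 + ‖p.2‖^2) ^ (αh/2 - 1) * (1 + ‖p.2‖^2) ^ ((2 - αh)/2) = 1 := by
    rw [← Real.rpow_add hB, show αh/2 - 1 + (2 - αh)/2 = 0 by ring, Real.rpow_zero]
  have eQ : (1 + ‖p.2‖^2) ^ (αh/2 - 1) = ((1 + ‖p.2‖^2) ^ ((2 - αh)/2))⁻¹ :=
    eq_inv_of_mul_eq_one_right e0
  have ht : p.1 = (p.1 / (γ * wn αh p.2)) * (γ * wn αh p.2) := by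
    exact (div_mul_cancel₀ _ hW.ne').symm
  have e1 : (γ * wn αh p.2) ^ (-β) = (γ * wn αh p.2) ^ (-(β+1)) * (γ * wn αh p.2) := by
    rw [← Real.rpow_add_one hW.ne']; congr 1; ring
  have e2 : (γ * wn αh p.2) ^ (-β-1) = (γ * wn αh p.2) ^ (-(β+1)) := by
    congr 1; ring
  have g1 : gg β (p.1 / (γ * wn αh p.2))
      = (p.1 / (γ * wn αh p.2)) * gg (β+1) (p.1 / (γ * wn αh p.2)) := gg_succ _ _
  have g2 : gg (β+1) (p.1 / (γ * wn αh p.2))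
      = (p.1 / (γ * wn αh p.2)) * gg (β+2) (p.1 / (γ * wn αh p.2)) := by
    have := gg_succ (β+1) (p.1 / (γ * wn αh p.2))
    rwa [show β+1+1 = β+2 by ring] at this
  rw [e2, eQ, g1, g2]
  rw [ht]
  generalize (p.1 / ((γ * wn αh p.2))) = s at *
  generalize hGG : gg (β+2) (s * (γ * wn αh p.2) / (γ * wn αh p.2)) = G
  rw [e1]
  have hwn : wn αh p.2 ≠ 0 := (wn_pos _ _).ne'
  field_simp
  ring
end Ex3

namespace Ex3
open Real Filter
variable {n : ℕ} {αh β γ κ : ℝ}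

lemma pdx_VV (hγ : 0 < γ) (i : Fin n) (p : Sp n) :
    pdx i (VV (n := n) αh β γ κ i) p =
      (-(κ * γ * αh)) * (1 * ((γ * wn αh p.2) ^ (-(β+1)) * gg (β+1) (p.1 / (γ * wn αh p.2)))
        + p.2 i *
          ((-(β+1)) * (γ * wn αh p.2) ^ (-(β+1)-1)
              * (γ * (αh * p.2 i * (1 + ‖p.2‖^2) ^ (αh/2 - 1)))
              * gg (β+1) (p.1 / (γ * wn αh p.2))
            + (γ * wn αh p.2) ^ (-(β+1)) *
              ((-(β+1) * gg (β+2) (p.1 / (γ * wn αh p.2)) + gg (β+3) (p.1 / (γ * wn αh p.2))) *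
                ((0 * (γ * wn αh p.2)
                    - p.1 * (γ * (αh * p.2 i * (1 + ‖p.2‖^2) ^ (αh/2 - 1))))
                  / (γ * wn αh p.2) ^ 2)))) := by
  refine pdx_eq i ((smooth_diff (VV_contDiff hγ i)).differentiableAt) ?_
  have hmaster := hasDerivAt_space_gen hγ αh (β+1) (-(β+1)) p.1 p.2 i
  rw [show β+1+1 = β+2 by ring, show β+1+2 = β+3 by ring] at hmaster
  have hcoord : HasDerivAt
      (fun h : ℝ => (p.2 + h • EuclideanSpace.single i (1:ℝ)) i) 1 0 := by
    have h1 : HasDerivAt (fun h : ℝ => p.2 i + h) 1 0 := by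
      simpa using (hasDerivAt_id (0:ℝ)).const_add (p.2 i)
    have heq : (fun h : ℝ => (p.2 + h • EuclideanSpace.single i (1:ℝ)) i)
        = (fun h : ℝ => p.2 i + h) := funext fun h => coord_line p.2 i h
    rw [heq]
    exact h1
  have hmul := hcoord.mul hmaster
  have h0 : p.2 + (0:ℝ) • EuclideanSpace.single i (1:ℝ) = p.2 := by simp
  simp only [h0] at hmul
  have := hmul.const_mul (-(κ * γ * αh))
  simpa [VV, coord_line] using this
end Ex3

namespace Ex3
open Real Filter
variable {n : ℕ}

lemma key_ineq {αh β γ κ q : ℝ} (hn : 1 ≤ n) (hq1 : 1 < q) (hαh : 0 < αh)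
    (hβ : β = 1 / (q - 1))
    (hγl : 1 / (αh * n * (q - 1)) < γ) (hγu : γ ≤ 1 / αh ^ 2)
    (hκl : 0 < κ) (hκu : κ ≤ (αh * n * (γ - 1 / (αh * n * (q - 1)))) ^ (1 / (q - 1)))
    (p : Sp n) :
    (∑ i : Fin n, pdx i (VV (n := n) αh β γ κ i) p) + nl q (UU αh β γ κ p)
      ≤ pdt (UU (n := n) αh β γ κ) p := by
  have hn' : (1:ℝ) ≤ (n:ℝ) := by exact_mod_cast hn
  have hq' : (0:ℝ) < q - 1 := by linarith
  have hden : (0:ℝ) < αh * n * (q - 1) := by positivity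
  have hγ : 0 < γ := lt_trans (by positivity) hγl
  have hB : (0:ℝ) < 1 + ‖p.2‖^2 := one_add_normsq_pos p.2
  have hW : 0 < γ * wn αh p.2 := W_pos hγ p.2
  set x := p.2 with hx
  set t := p.1 with htt
  set B : ℝ := 1 + ‖x‖^2 with hBdef
  set Q : ℝ := B ^ (αh/2 - 1) with hQdef
  have hQ : 0 < Q := Real.rpow_pos_of_pos hB _
  set W : ℝ := γ * wn αh x with hWdef
  set s : ℝ := t / W with hsdef
  -- the values A and C
  set A : ℝ := (-(κ * γ * αh)) * (W ^ (-(β+1)) * gg (β+1) s) with hAdef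
  set C : ℝ := (-(κ * γ * αh)) * ((-(β+1)) * W ^ (-(β+1)-1) * (γ * (αh * Q)) * gg (β+1) s
      + W ^ (-(β+1)) * ((-(β+1) * gg (β+2) s + gg (β+3) s) *
          ((0 * W - t * (γ * (αh * Q))) / W ^ 2))) with hCdef
  have hsum : (∑ i : Fin n, pdx i (VV (n := n) αh β γ κ i) p)
      = (n:ℝ) * A + ‖x‖^2 * C := by
    have h1 : ∀ i : Fin n, pdx i (VV (n := n) αh β γ κ i) p = A + (x i)^2 * C := by
      intro i
      rw [pdx_VV hγ i p, hAdef, hCdef]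
      ring
    rw [Finset.sum_congr rfl (fun i _ => h1 i), Finset.sum_add_distrib, Finset.sum_const,
      ← Finset.sum_mul, ← normsq_eq_sum, Finset.card_univ, Fintype.card_fin, nsmul_eq_mul]
  rw [hsum, pdt_UU hγ p]
  rcases le_or_gt t 0 with ht | ht
  · -- everything vanishes
    have hs : s ≤ 0 := div_nonpos_of_nonpos_of_nonneg ht hW.le
    have hU : UU (n := n) αh β γ κ p = 0 := by
      unfold UU
      rw [← htt, ← hWdef, ← hsdef, gg_of_nonpos hs, mul_zero, mul_zero]
    rw [hU, hAdef, hCdef, ← htt, ← hWdef, ← hsdef,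
      gg_of_nonpos hs, gg_of_nonpos hs, gg_of_nonpos hs]
    simp [nl]
  · -- the main case t > 0
    have hs : 0 < s := div_pos ht hW
    have hts : t = s * W := by rw [hsdef]; field_simp
    set E : ℝ := Real.exp (-1/s) with hEdef
    have hE : 0 < E := Real.exp_pos _
    have hE1 : E ≤ 1 := by
      rw [hEdef, Real.exp_le_one_iff]
      exact div_nonpos_of_nonpos_of_nonneg (by norm_num) hs.le
    set P : ℝ := W ^ (-(β+1)) with hPdef
    set R : ℝ := s ^ (-(β+1)) with hRdef
    have hP : 0 < P := Real.rpow_pos_of_pos hW _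
    have hR : 0 < R := Real.rpow_pos_of_pos hs _
    -- gg evaluations
    have gg1 : gg (β+1) s = R * E := by rw [gg_of_pos hs, hRdef, hEdef]
    have gg2 : gg (β+2) s = R * s⁻¹ * E := by
      rw [gg_of_pos hs, hRdef, hEdef]
      congr 1
      rw [show -(β+2) = -(β+1) + (-1) by ring, Real.rpow_add hs, Real.rpow_neg_one]
    have gg3 : gg (β+3) s = R * s⁻¹ * s⁻¹ * E := by
      rw [gg_of_pos hs, hRdef, hEdef]
      rw [show -(β+3) = -(β+1) + (-1) + (-1) by ring, Real.rpow_add hs, Real.rpow_add hs,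
        Real.rpow_neg_one]
    have ggb : gg β s = R * s * E := by
      rw [gg_of_pos hs, hRdef, hEdef]
      congr 1
      rw [show -β = -(β+1) + 1 by ring, Real.rpow_add hs, Real.rpow_one]
    have eW : W ^ (-β) = P * W := by
      rw [hPdef, ← Real.rpow_add_one hW.ne']
      congr 1; ring
    have eW2 : W ^ (-(β+1)-1) = P * W⁻¹ := by
      rw [hPdef, show -(β+1)-1 = -(β+1) + (-1) by ring, Real.rpow_add hW, Real.rpow_neg_one]
    -- simplified forms
    have hA' : A = -(κ * γ * αh) * (P * (R * E)) := by
      rw [hAdef, gg1, hPdef]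
    have hC' : ‖x‖^2 * C = κ * (γ * αh)^2 * (‖x‖^2 * Q) * (P * (R * E)) * (s⁻¹ * W⁻¹) := by
      rw [hCdef, gg1, gg2, gg3, eW2, hts]
      field_simp
      ring
    have hpdt' : κ * (W ^ (-β) * ((-β * gg (β+1) s + gg (β+2) s) * (1 / W)))
        = κ * (P * (R * E)) * (s⁻¹ - β) := by
      rw [gg1, gg2, eW]
      field_simp
      ring
    have hU : UU (n := n) αh β γ κ p = κ * (P * (R * E)) * t := by
      unfold UU
      rw [← htt, ← hWdef, ← hsdef, ggb, eW, hts]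
      ring
    have hUpos : 0 < UU (n := n) αh β γ κ p := by
      rw [hU, hts]; positivity
    have hPR : P * R = t ^ (-β) * t⁻¹ := by
      rw [hPdef, hRdef, ← Real.mul_rpow hW.le hs.le, show W * s = t by rw [hts]; ring,
        show -(β+1) = -β + (-1) by ring, Real.rpow_add ht, Real.rpow_neg_one]
    have hU2 : UU (n := n) αh β γ κ p = κ * (t ^ (-β) * E) := by
      rw [hU]
      calc κ * (P * (R * E)) * t = κ * ((P * R) * E) * t := by ring
        _ = κ * ((t ^ (-β) * t⁻¹) * E) * t := by rw [hPR]
        _ = κ * (t ^ (-β) * E) * (t⁻¹ * t) := by ring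
        _ = κ * (t ^ (-β) * E) := by rw [inv_mul_cancel₀ ht.ne', mul_one]
    -- the nonlinearity
    set EQ : ℝ := E ^ (q - 1) with hEQdef
    have hEQ : 0 < EQ := Real.rpow_pos_of_pos hE _
    have hEQ1 : EQ ≤ 1 := Real.rpow_le_one hE.le hE1 (by linarith)
    have htb : (0:ℝ) < t ^ (-β) := Real.rpow_pos_of_pos ht _
    have hnl : nl q (UU (n := n) αh β γ κ p) = κ ^ (q-1) * EQ * (κ * (P * (R * E))) := by
      unfold nl
      rw [abs_of_pos hUpos, hU2]
      rw [Real.mul_rpow hκl.le (by positivity), Real.mul_rpow htb.le hE.le]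
      rw [← Real.rpow_mul ht.le, show (-β) * (q-1) = -1 by rw [hβ]; field_simp,
        Real.rpow_neg_one, ← hEQdef]
      calc κ ^ (q-1) * (t⁻¹ * EQ) * (κ * (t ^ (-β) * E))
          = κ ^ (q-1) * EQ * (κ * ((t ^ (-β) * t⁻¹) * E)) := by ring
        _ = κ ^ (q-1) * EQ * (κ * ((P * R) * E)) := by rw [hPR]
        _ = κ ^ (q-1) * EQ * (κ * (P * (R * E))) := by ring
    -- key bounds
    have hXpos : 0 < αh * n * (γ - 1 / (αh * n * (q - 1))) := by
      have : 0 < γ - 1 / (αh * n * (q - 1)) := by linarith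
      positivity
    have bound1 : κ ^ (q-1) ≤ γ * αh * n - β := by
      have h1 : κ ^ (q-1) ≤ ((αh * n * (γ - 1 / (αh * n * (q - 1)))) ^ (1/(q-1))) ^ (q-1) :=
        Real.rpow_le_rpow hκl.le hκu (by linarith)
      have h2 : ((αh * n * (γ - 1 / (αh * n * (q - 1)))) ^ (1/(q-1))) ^ (q-1)
          = αh * n * (γ - 1 / (αh * n * (q - 1))) := by
        rw [← Real.rpow_mul hXpos.le, one_div_mul_cancel hq'.ne', Real.rpow_one]
      have h3 : αh * n * (γ - 1 / (αh * n * (q - 1))) = γ * αh * n - β := by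
        rw [hβ]
        field_simp
      rw [h2, h3] at h1
      exact h1
    have hQx : ‖x‖^2 * Q ≤ wn αh x := by
      have h1 : ‖x‖^2 * Q ≤ B * Q :=
        mul_le_mul_of_nonneg_right (by rw [hBdef]; linarith) hQ.le
      have h2 : B * Q = wn αh x := by
        show B * Q = (1 + ‖x‖^2) ^ (αh/2)
        rw [← hBdef, hQdef]
        have h4 := Real.rpow_add hB 1 (αh/2-1)
        rw [Real.rpow_one] at h4
        rw [← h4]
        congr 1
        ring
      linarith
    have hαγ : γ * αh^2 ≤ 1 := by
      have h := mul_le_mul_of_nonneg_right hγu (sq_nonneg αh)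
      rwa [one_div, inv_mul_cancel₀ (by positivity : (αh^2:ℝ) ≠ 0)] at h
    have bound2 : (γ * αh)^2 * (‖x‖^2 * Q) ≤ W := by
      have t1 : (γ * αh)^2 * (‖x‖^2 * Q) ≤ (γ * αh)^2 * wn αh x :=
        mul_le_mul_of_nonneg_left hQx (by positivity)
      have t2 : (γ * αh)^2 * wn αh x ≤ γ * wn αh x := by
        have e : (γ * αh)^2 = γ * (γ * αh^2) := by ring
        rw [e]
        have h3 : γ * (γ * αh^2) ≤ γ * 1 := mul_le_mul_of_nonneg_left hαγ hγ.le
        rw [mul_one] at h3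
        exact mul_le_mul_of_nonneg_right h3 (wn_pos αh x).le
      calc (γ * αh)^2 * (‖x‖^2 * Q) ≤ (γ * αh)^2 * wn αh x := t1
        _ ≤ γ * wn αh x := t2
        _ = W := by rw [hWdef]
    -- assemble
    rw [hA', hC', hpdt', hnl]
    have hZ : 0 < P * (R * E) := mul_pos hP (mul_pos hR hE)
    have h1 : κ ^ (q-1) * EQ * (κ * (P * (R * E)))
        ≤ (γ * αh * n - β) * (κ * (P * (R * E))) := by
      have hk : 0 ≤ κ ^ (q-1) := (Real.rpow_pos_of_pos hκl _).le
      have hmain : κ ^ (q-1) * EQ ≤ γ * αh * n - β := by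
        calc κ ^ (q-1) * EQ ≤ κ ^ (q-1) * 1 := mul_le_mul_of_nonneg_left hEQ1 hk
          _ = κ ^ (q-1) := mul_one _
          _ ≤ γ * αh * n - β := bound1
      exact mul_le_mul_of_nonneg_right hmain (mul_pos hκl hZ).le
    have h2 : κ * (γ * αh)^2 * (‖x‖^2 * Q) * (P * (R * E)) * (s⁻¹ * W⁻¹)
        ≤ κ * (P * (R * E)) * s⁻¹ := by
      have hpos : 0 ≤ κ * (P * (R * E)) * (s⁻¹ * W⁻¹) :=
        mul_nonneg (mul_nonneg hκl.le hZ.le) (mul_nonneg (inv_nonneg.2 hs.le) (inv_nonneg.2 hW.le))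
      have hmul := mul_le_mul_of_nonneg_left bound2 hpos
      calc κ * (γ * αh)^2 * (‖x‖^2 * Q) * (P * (R * E)) * (s⁻¹ * W⁻¹)
          = κ * (P * (R * E)) * (s⁻¹ * W⁻¹) * ((γ * αh)^2 * (‖x‖^2 * Q)) := by ring
        _ ≤ κ * (P * (R * E)) * (s⁻¹ * W⁻¹) * W := hmul
        _ = κ * (P * (R * E)) * s⁻¹ * (W⁻¹ * W) := by ring
        _ = κ * (P * (R * E)) * s⁻¹ := by rw [inv_mul_cancel₀ hW.ne', mul_one]
    linarith [h1, h2]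
end Ex3
/-- **Example 3** (sharpness of Theorems 1–3 for `α ≤ 0`): the coefficients built from
`α̂ > 0` satisfy condition (8) with exponent `α ≤ 0`, and the profile `u` is a nontrivial
nonnegative `C^∞` classical solution of `u_t ≥ Σᵢ ∂_{x_i}(a_{ii} ∂_{x_i}u) + |u|^{q−1}u`
in the whole space. -/
theorem example3_sharpness (n : ℕ) (hn : 1 ≤ n) (α αh q β γ κ : ℝ)
    (hα : α ≤ 0) (hq1 : 1 < q) (hq2 : 1 + α / n < q)
    (hαh : 0 < αh) (hqh : 1 + αh / n < q)
    (hβ : β = 1 / (q - 1))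
    (hγl : 1 / (αh * n * (q - 1)) < γ) (hγu : γ ≤ 1 / αh ^ 2)
    (hκl : 0 < κ) (hκu : κ ≤ (αh * n * (γ - 1 / (αh * n * (q - 1)))) ^ (1 / (q - 1))) :
    (∃ c : ℝ, 0 < c ∧ Cond8 (fun p : Sp n => coefDiag n αh p) α c) ∧
    ContDiff ℝ (⊤ : ℕ∞) (profileU n αh β γ κ) ∧
    (∀ p, 0 ≤ profileU n αh β γ κ p) ∧
    profileU n αh β γ κ ≠ 0 ∧
    (∀ p : Sp n,
      (∑ i : Fin n, pdx i (fun p' => coefDiag n αh p' * pdx i (profileU n αh β γ κ) p') p) +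
        nl q (profileU n αh β γ κ p) ≤ pdt (profileU n αh β γ κ) p) := by
  have hn' : (1:ℝ) ≤ (n:ℝ) := by exact_mod_cast hn
  have hq' : (0:ℝ) < q - 1 := by linarith
  have hγ : 0 < γ := lt_trans (by positivity) hγl
  refine ⟨?_, ?_, ?_, ?_, ?_⟩
  · -- Condition (8) with c = 2
    refine ⟨2, by norm_num, ?_⟩
    intro R hR
    refine Filter.Eventually.of_forall (fun p hp => ?_)
    have hxR : ‖p.2‖ < R := hp.2
    have hx0 : (0:ℝ) ≤ ‖p.2‖ := norm_nonneg _
    have hB : (0:ℝ) < 1 + ‖p.2‖^2 := by positivity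
    have hR0 : (0:ℝ) < R := by linarith
    have hRα : (1:ℝ) ≤ R ^ (2 - α) := Real.one_le_rpow hR.le (by linarith)
    show (1 + ‖p.2‖^2) ^ ((2 - αh)/2) ≤ 2 * R ^ (2 - α)
    rcases le_or_gt αh 2 with hc | hc
    · have h1 : 1 + ‖p.2‖^2 ≤ 2 * R^2 := by nlinarith
      have h2 : (1 + ‖p.2‖^2) ^ ((2 - αh)/2) ≤ (2 * R^2) ^ ((2 - αh)/2) :=
        Real.rpow_le_rpow hB.le h1 (by linarith)
      have h3 : ((2:ℝ) * R^2) ^ ((2 - αh)/2)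
          = 2 ^ ((2 - αh)/2) * (R^2) ^ ((2 - αh)/2) :=
        Real.mul_rpow (by norm_num) (by positivity)
      have h4 : ((2:ℝ)) ^ ((2 - αh)/2) ≤ 2 := by
        calc ((2:ℝ)) ^ ((2 - αh)/2) ≤ (2:ℝ) ^ (1:ℝ) :=
              Real.rpow_le_rpow_of_exponent_le (by norm_num) (by linarith)
          _ = 2 := Real.rpow_one 2
      have h5 : ((R^2 : ℝ)) ^ ((2 - αh)/2) = R ^ (2 - αh) := by
        rw [← Real.rpow_natCast R 2, ← Real.rpow_mul hR0.le]
        congr 1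
        push_cast
        ring
      have h6 : R ^ (2 - αh) ≤ R ^ (2 - α) :=
        Real.rpow_le_rpow_of_exponent_le hR.le (by linarith)
      have h7 : (0:ℝ) ≤ R ^ (2 - αh) := (Real.rpow_pos_of_pos hR0 _).le
      calc (1 + ‖p.2‖^2) ^ ((2 - αh)/2) ≤ 2 ^ ((2 - αh)/2) * (R^2) ^ ((2 - αh)/2) := by
            rw [← h3]; exact h2
        _ = 2 ^ ((2 - αh)/2) * R ^ (2 - αh) := by rw [h5]
        _ ≤ 2 * R ^ (2 - α) := by
            have := mul_le_mul h4 h6 h7 (by norm_num)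
            linarith
    · have h1 : (1 + ‖p.2‖^2) ^ ((2 - αh)/2) ≤ 1 :=
        Real.rpow_le_one_of_one_le_of_nonpos (by nlinarith) (by linarith)
      linarith
  · -- smoothness
    rw [Ex3.profileU_eq hγ]
    exact Ex3.UU_contDiff hγ
  · -- nonnegativity
    intro p
    unfold profileU
    split
    · positivity
    · exact le_refl 0
  · -- nontriviality
    intro h
    have h0 := congrFun h ((1 : ℝ), (0 : EuclideanSpace ℝ (Fin n)))
    simp only [profileU, if_pos one_pos, Pi.zero_apply] at h0
    rw [Real.one_rpow] at h0
    have hexp := Real.exp_pos (-γ * (1 + ‖(0 : EuclideanSpace ℝ (Fin n))‖^2) ^ (αh/2) / 1)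
    nlinarith
  · -- the differential inequality
    intro p
    rw [Ex3.profileU_eq hγ]
    have hfun : ∀ i : Fin n,
        (fun p' => coefDiag n αh p' * pdx i (Ex3.UU (n := n) αh β γ κ) p')
          = Ex3.VV αh β γ κ i :=
      fun i => funext fun p' => Ex3.coef_pdxUU_eq_VV hγ i p'
    have hsum : (∑ i : Fin n,
        pdx i (fun p' => coefDiag n αh p' * pdx i (Ex3.UU (n := n) αh β γ κ) p') p)
        = ∑ i : Fin n, pdx i (Ex3.VV (n := n) αh β γ κ i) p :=
      Finset.sum_congr rfl (fun i _ => by rw [hfun i])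
    rw [hsum]
    exact Ex3.key_ineq hn hq1 hαh hβ hγl hγu hκl hκu p
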